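/- Assume the index sets are ordered, i.e. I1 = {1,…,l} and I0 = {l+1,…,n}, and let Ĉ be the stochastic SC decoder: a random vector on a common probability space with (X,Y) such that Ĉ_1^l = AX and, for each i ∈ {l+1,…,n}, conditionally on (Ĉ_1^{i−1}, Y) the symbol Ĉ_i has distribution μ_{C_i|C_1^{i−1}Y}(· | Ĉ_1^{i−1}, Y) and is conditionally independent of X. Then for every decoder φ : 𝒳^l × 𝒴^n → 𝒳^n, Prob(T^{−1}(Ĉ) ≠ X) ≤ 2 · Prob(φ(AX,Y) ≠ X). -/

import Mathlib

open Finset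

noncomputable def probOf {Ω : Type*} [Fintype Ω] (p : Ω → ℝ) (E : Set Ω) : ℝ :=
  ∑ ω, E.indicator p ω

noncomputable def condProb {Ω : Type*} [Fintype Ω] (p : Ω → ℝ) (E F : Set Ω) : ℝ :=
  probOf p (E ∩ F) / probOf p F

noncomputable def entropyOf {Ω Z : Type*} [Fintype Ω] [Fintype Z] (p : Ω → ℝ) (V : Ω → Z) : ℝ :=
  ∑ z, Real.negMulLog (probOf p {ω | V ω = z})

noncomputable def condEntropyOf {Ω U V : Type*} [Fintype Ω] [Fintype U] [Fintype V]
    (p : Ω → ℝ) (Uv : Ω → U) (Vv : Ω → V) : ℝ :=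
  entropyOf p (fun ω => (Uv ω, Vv ω)) - entropyOf p Vv

def prefixVec {𝒳 : Type*} {n : ℕ} (c : Fin n → 𝒳) (m : ℕ) (h : m ≤ n) : Fin m → 𝒳 :=
  fun k => c ⟨k.1, lt_of_lt_of_le k.2 h⟩

def scVecGo {𝒳 : Type*} {n : ℕ} (g : (i : Fin n) → (Fin i.1 → 𝒳) → 𝒳) :
    (k : ℕ) → k < n → 𝒳
  | k, hk => g ⟨k, hk⟩ (fun j => scVecGo g j.1 (j.2.trans hk))
termination_by k _ => k
decreasing_by exact j.2

def scVec {𝒳 : Type*} {n : ℕ} (g : (i : Fin n) → (Fin i.1 → 𝒳) → 𝒳) : Fin n → 𝒳 :=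
  fun i => scVecGo g i.1 i.2

def scDec {𝒳 𝒴 : Type*} {n l : ℕ}
    (I1 : Finset (Fin n)) (hc1 : I1.card = l)
    (f : (i : Fin n) → (Fin i.1 → 𝒳) → (Fin n → 𝒴) → 𝒳)
    (c : Fin l → 𝒳) (y : Fin n → 𝒴) : Fin n → 𝒳 :=
  scVec (fun i pref => if h : i ∈ I1 then c ((I1.orderIsoOfFin hc1).symm ⟨i, h⟩) else f i pref y)

def scDecOrd {𝒳 𝒴 : Type*} {n l : ℕ}
    (f : (i : Fin n) → (Fin i.1 → 𝒳) → (Fin n → 𝒴) → 𝒳)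
    (c : Fin l → 𝒳) (y : Fin n → 𝒴) : Fin n → 𝒳 :=
  scVec (fun i pref => if h : i.1 < l then c ⟨i.1, h⟩ else f i pref y)

section Stmt5Aux

variable {Ω : Type*} [Fintype Ω]

lemma probOf_nonneg (p : Ω → ℝ) (hp0 : ∀ ω, 0 ≤ p ω) (E : Set Ω) : 0 ≤ probOf p E :=
  Finset.sum_nonneg fun ω _ => Set.indicator_nonneg (fun a _ => hp0 a) ω

lemma probOf_empty (p : Ω → ℝ) : probOf p (∅ : Set Ω) = 0 := by
  simp [probOf]

lemma probOf_mono (p : Ω → ℝ) (hp0 : ∀ ω, 0 ≤ p ω) {E F : Set Ω} (h : E ⊆ F) :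
    probOf p E ≤ probOf p F :=
  Finset.sum_le_sum fun ω _ => Set.indicator_le_indicator_of_subset h hp0 ω

lemma condProb_nonneg (p : Ω → ℝ) (hp0 : ∀ ω, 0 ≤ p ω) (E F : Set Ω) :
    0 ≤ condProb p E F :=
  div_nonneg (probOf_nonneg p hp0 _) (probOf_nonneg p hp0 _)

lemma probOf_inter_eq (p : Ω → ℝ) (hp0 : ∀ ω, 0 ≤ p ω) (E F : Set Ω) :
    probOf p (E ∩ F) = condProb p E F * probOf p F := by
  by_cases h : probOf p F = 0
  · have h1 : probOf p (E ∩ F) = 0 :=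
      le_antisymm (h ▸ probOf_mono p hp0 Set.inter_subset_right) (probOf_nonneg p hp0 _)
    simp [h1, h, condProb]
  · rw [condProb, div_mul_cancel₀ _ h]

lemma probOf_partition {Z : Type*} [Fintype Z] (p : Ω → ℝ) (E : Set Ω) (V : Ω → Z) :
    probOf p E = ∑ z, probOf p (E ∩ {ω | V ω = z}) := by
  classical
  unfold probOf
  rw [Finset.sum_comm]
  refine Finset.sum_congr rfl fun ω _ => ?_
  have h : ∀ z, (E ∩ {ω' | V ω' = z}).indicator p ω =
      if V ω = z then E.indicator p ω else 0 := by
    intro z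
    by_cases h1 : V ω = z <;> by_cases h2 : ω ∈ E <;>
      simp [Set.indicator_apply, Set.mem_inter_iff, Set.mem_setOf_eq, h1, h2]
  rw [Finset.sum_congr rfl fun z _ => h z, Finset.sum_ite_eq]
  simp

lemma sum_ite_sub {α : Type*} [Fintype α] [DecidableEq α] (P : α → Prop) [DecidablePred P]
    (f : α → ℝ) (a : α) :
    (∑ x, if P x ∧ x ≠ a then f x else 0) =
      (∑ x, if P x then f x else 0) - (if P a then f a else 0) := by
  have h1 : ∀ x, (if P x then f x else 0) =
      (if P x ∧ x ≠ a then f x else 0) + (if P x ∧ x = a then f x else 0) := by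
    intro x; by_cases hx : x = a <;> by_cases hp : P x <;> simp [hx, hp]
  rw [Finset.sum_congr rfl fun x _ => h1 x, Finset.sum_add_distrib]
  have h2 : (∑ x, if P x ∧ x = a then f x else 0) = (if P a then f a else 0) := by
    rw [Finset.sum_eq_single a]
    · by_cases hp : P a <;> simp [hp]
    · intro b _ hb; simp [hb]
    · intro h; exact absurd (Finset.mem_univ a) h
  rw [h2]; ring

lemma sum_fiber {α β : Type*} [Fintype α] [Fintype β] [DecidableEq β] (A : α → β)
    (f : α → ℝ) :
    ∑ x, f x = ∑ s, ∑ x, if A x = s then f x else 0 := by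
  rw [Finset.sum_comm]
  exact Finset.sum_congr rfl fun x _ => by simp [Finset.sum_ite_eq]

lemma prefixVec_n {𝒳 : Type*} {n : ℕ} (c : Fin n → 𝒳) (h : n ≤ n) : prefixVec c n h = c :=
  funext fun k => congrArg c (Fin.ext rfl)

lemma prefix_succ_iff {𝒳 : Type*} {n i : ℕ} (hin : i < n) (h : i + 1 ≤ n)
    (u v : Fin n → 𝒳) :
    prefixVec u (i + 1) h = prefixVec v (i + 1) h ↔
      (u ⟨i, hin⟩ = v ⟨i, hin⟩ ∧ prefixVec u i hin.le = prefixVec v i hin.le) := by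
  constructor
  · intro he
    refine ⟨?_, ?_⟩
    · exact congrFun he ⟨i, Nat.lt_succ_self i⟩
    · funext k
      exact congrFun he ⟨k.1, Nat.lt_succ_of_lt k.2⟩
  · rintro ⟨h1, h2⟩
    funext k
    by_cases hk : k.1 < i
    · exact congrFun h2 ⟨k.1, hk⟩
    · have hki : k.1 = i := by have := k.2; omega
      have : (⟨k.1, lt_of_lt_of_le k.2 h⟩ : Fin n) = ⟨i, hin⟩ := Fin.ext hki
      show u ⟨k.1, lt_of_lt_of_le k.2 h⟩ = v ⟨k.1, lt_of_lt_of_le k.2 h⟩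
      rw [this]; exact h1

noncomputable def gfun {𝒳 𝒴 : Type*} {n : ℕ} (p : Ω → ℝ) (C : Ω → Fin n → 𝒳)
    (Y : Ω → Fin n → 𝒴) (i : Fin n) (c : Fin n → 𝒳) (y : Fin n → 𝒴) : ℝ :=
  condProb p {ω | C ω i = c i}
    {ω | prefixVec (C ω) i.1 i.2.le = prefixVec c i.1 i.2.le ∧ Y ω = y}

noncomputable def Qfun {𝒳 𝒴 : Type*} {n : ℕ} (p : Ω → ℝ) (C : Ω → Fin n → 𝒳)
    (Y : Ω → Fin n → 𝒴) (l i : ℕ) (c : Fin n → 𝒳) (y : Fin n → 𝒴) : ℝ :=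
  ∏ j : Fin n, if l ≤ j.1 ∧ j.1 < i then gfun p C Y j c y else 1

lemma Qfun_base {𝒳 𝒴 : Type*} {n : ℕ} (p : Ω → ℝ) (C : Ω → Fin n → 𝒳)
    (Y : Ω → Fin n → 𝒴) (l : ℕ) (c : Fin n → 𝒳) (y : Fin n → 𝒴) :
    Qfun p C Y l l c y = 1 :=
  Finset.prod_eq_one fun j _ => if_neg (by omega)

lemma Qfun_nonneg {𝒳 𝒴 : Type*} {n : ℕ} (p : Ω → ℝ) (hp0 : ∀ ω, 0 ≤ p ω)
    (C : Ω → Fin n → 𝒳) (Y : Ω → Fin n → 𝒴) (l i : ℕ) (c : Fin n → 𝒳) (y : Fin n → 𝒴) :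
    0 ≤ Qfun p C Y l i c y :=
  Finset.prod_nonneg fun j _ => by
    by_cases h : l ≤ j.1 ∧ j.1 < i
    · rw [if_pos h]; exact condProb_nonneg p hp0 _ _
    · rw [if_neg h]; exact zero_le_one

lemma Qfun_succ {𝒳 𝒴 : Type*} {n : ℕ} (p : Ω → ℝ) (C : Ω → Fin n → 𝒳)
    (Y : Ω → Fin n → 𝒴) {l i : ℕ} (hl : l ≤ i) (hin : i < n)
    (c : Fin n → 𝒳) (y : Fin n → 𝒴) :
    Qfun p C Y l (i + 1) c y = Qfun p C Y l i c y * gfun p C Y ⟨i, hin⟩ c y := by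
  unfold Qfun
  rw [← Finset.mul_prod_erase Finset.univ _ (Finset.mem_univ (⟨i, hin⟩ : Fin n))]
  have h1 : (if l ≤ (⟨i, hin⟩ : Fin n).1 ∧ (⟨i, hin⟩ : Fin n).1 < i + 1
      then gfun p C Y ⟨i, hin⟩ c y else 1) = gfun p C Y ⟨i, hin⟩ c y :=
    if_pos ⟨hl, Nat.lt_succ_self i⟩
  rw [h1]
  have h2 : ∀ j ∈ Finset.univ.erase (⟨i, hin⟩ : Fin n),
      (if l ≤ j.1 ∧ j.1 < i + 1 then gfun p C Y j c y else 1) =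
        (if l ≤ j.1 ∧ j.1 < i then gfun p C Y j c y else 1) := by
    intro j hj
    have hne : j.1 ≠ i := fun hji => (Finset.mem_erase.mp hj).1 (Fin.ext hji)
    by_cases hc : l ≤ j.1 ∧ j.1 < i
    · rw [if_pos hc, if_pos ⟨hc.1, Nat.lt_succ_of_lt hc.2⟩]
    · rw [if_neg hc, if_neg (by omega)]
  rw [Finset.prod_congr rfl h2]
  rw [← Finset.mul_prod_erase Finset.univ
    (fun j : Fin n => if l ≤ j.1 ∧ j.1 < i then gfun p C Y j c y else 1)
    (Finset.mem_univ (⟨i, hin⟩ : Fin n))]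
  rw [if_neg (fun hcond => lt_irrefl i hcond.2 : ¬(l ≤ ((⟨i, hin⟩ : Fin n) : ℕ) ∧ ((⟨i, hin⟩ : Fin n) : ℕ) < i))]
  ring

lemma key_ineq {α : Type*} [Fintype α] [DecidableEq α] (S : Finset α) (t : α → ℝ)
    (ht0 : ∀ x ∈ S, 0 ≤ t x) (ht1 : ∑ x ∈ S, t x = 1) (x₀ : α) :
    ∑ x ∈ S, t x * (1 - t x) ≤ 2 * (1 - if x₀ ∈ S then t x₀ else 0) := by
  by_cases hm : x₀ ∈ S
  · rw [if_pos hm]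
    have h2 : t x₀ ≤ 1 := ht1 ▸ Finset.single_le_sum ht0 hm
    have hsq : t x₀ ^ 2 ≤ ∑ x ∈ S, t x ^ 2 :=
      Finset.single_le_sum (f := fun x => t x ^ 2) (fun x _ => sq_nonneg _) hm
    have hsum : ∑ x ∈ S, t x * (1 - t x) = 1 - ∑ x ∈ S, t x ^ 2 := by
      have : ∀ x ∈ S, t x * (1 - t x) = t x - t x ^ 2 := fun x _ => by ring
      rw [Finset.sum_congr rfl this, Finset.sum_sub_distrib, ht1]
    rw [hsum]
    nlinarith [sq_nonneg (1 - t x₀)]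
  · rw [if_neg hm]
    have hsq : (0 : ℝ) ≤ ∑ x ∈ S, t x ^ 2 :=
      Finset.sum_nonneg fun x _ => sq_nonneg _
    have hsum : ∑ x ∈ S, t x * (1 - t x) = 1 - ∑ x ∈ S, t x ^ 2 := by
      have : ∀ x ∈ S, t x * (1 - t x) = t x - t x ^ 2 := fun x _ => by ring
      rw [Finset.sum_congr rfl this, Finset.sum_sub_distrib, ht1]
    rw [hsum]; linarith

end Stmt5Aux

/-- for ordered index sets, the stochastic SC decoder `Ĉ` (a random vector
with `Ĉ_1^l = AX` which at each `i ∈ I0` samples from `μ_{C_i|C_1^{i-1}Y}(·|Ĉ_1^{i-1},Y)`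
conditionally independently of `X`) satisfies
`Prob(T⁻¹(Ĉ) ≠ X) ≤ 2 · Prob(φ(AX,Y) ≠ X)` for every decoder `φ`. -/
theorem stmt5
    {Ω 𝒳 𝒴 : Type*} [Fintype Ω] [Fintype 𝒳] [Fintype 𝒴]
    (hcard : 2 ≤ Fintype.card 𝒳)
    (n l : ℕ) (hl : l ≤ n)
    (p : Ω → ℝ) (hp0 : ∀ ω, 0 ≤ p ω) (hp1 : ∑ ω, p ω = 1)
    (X : Ω → (Fin n → 𝒳)) (Y : Ω → (Fin n → 𝒴)) (Chat : Ω → (Fin n → 𝒳))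
    (A : (Fin n → 𝒳) → (Fin l → 𝒳)) (B : (Fin n → 𝒳) → (Fin (n - l) → 𝒳))
    (T : (Fin n → 𝒳) ≃ (Fin n → 𝒳))
    (hT1 : ∀ x (j : Fin l), T x (Fin.castLE hl j) = A x j)
    (hT0 : ∀ x (j : Fin (n - l)), T x ⟨l + j.1, by have := j.2; omega⟩ = B x j)
    (hinit : ∀ ω, prefixVec (Chat ω) l hl = A (X ω))
    (hstep : ∀ (i : Fin n), l ≤ i.1 → ∀ (cp : Fin i.1 → 𝒳) (y : Fin n → 𝒴),
      0 < probOf p {ω | prefixVec (T (X ω)) i.1 i.2.le = cp ∧ Y ω = y} →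
      ∀ (a : 𝒳) (x : Fin n → 𝒳),
        probOf p {ω | Chat ω i = a ∧ X ω = x ∧ prefixVec (Chat ω) i.1 i.2.le = cp ∧ Y ω = y} =
          condProb p {ω | T (X ω) i = a}
              {ω | prefixVec (T (X ω)) i.1 i.2.le = cp ∧ Y ω = y} *
            probOf p {ω | X ω = x ∧ prefixVec (Chat ω) i.1 i.2.le = cp ∧ Y ω = y})
    (φ : (Fin l → 𝒳) → (Fin n → 𝒴) → (Fin n → 𝒳)) :
    probOf p {ω | T.symm (Chat ω) ≠ X ω} ≤
      2 * probOf p {ω | φ (A (X ω)) (Y ω) ≠ X ω} := by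
  classical
  have hprefT : ∀ x : Fin n → 𝒳, prefixVec (T x) l hl = A x := fun x =>
    funext fun j => hT1 x j
  -- fiber decomposition of the (A ∘ X, Y) probability
  have hfiber : ∀ (s : Fin l → 𝒳) (y : Fin n → 𝒴),
      probOf p {ω | A (X ω) = s ∧ Y ω = y} =
        ∑ x, if A x = s then probOf p {ω | X ω = x ∧ Y ω = y} else 0 := by
    intro s y
    rw [probOf_partition p _ X]
    refine Finset.sum_congr rfl fun x _ => ?_
    by_cases hA : A x = s
    · rw [if_pos hA]
      congr 1
      ext ω
      simp only [Set.mem_inter_iff, Set.mem_setOf_eq]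
      constructor
      · rintro ⟨⟨h1, h2⟩, h3⟩; exact ⟨h3, h2⟩
      · rintro ⟨h1, h2⟩; exact ⟨⟨by rw [h1, hA], h2⟩, h1⟩
    · rw [if_neg hA]
      have he : ({ω | A (X ω) = s ∧ Y ω = y} ∩ {ω | X ω = x}) = (∅ : Set Ω) :=
        Set.eq_empty_iff_forall_notMem.mpr fun ω hω => hA (by rw [← hω.2, hω.1.1])
      rw [he, probOf_empty]
  -- chain rule for C = T ∘ X
  have chainC : ∀ i, l ≤ i → ∀ (hi : i ≤ n) (c : Fin n → 𝒳) (y : Fin n → 𝒴),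
      probOf p {ω | prefixVec (T (X ω)) i hi = prefixVec c i hi ∧ Y ω = y} =
        probOf p {ω | A (X ω) = prefixVec c l hl ∧ Y ω = y} *
          Qfun p (fun ω => T (X ω)) Y l i c y := by
    intro i hli
    induction i, hli using Nat.le_induction with
    | base =>
      intro hi c y
      rw [Qfun_base, mul_one]
      congr 1
      ext ω
      simp only [Set.mem_setOf_eq]
      constructor
      · rintro ⟨h1, h2⟩
        refine ⟨?_, h2⟩
        have h1' : prefixVec (T (X ω)) l hl = prefixVec c l hl := h1
        rw [hprefT (X ω)] at h1'
        exact h1'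
      · rintro ⟨h1, h2⟩
        refine ⟨?_, h2⟩
        show prefixVec (T (X ω)) l hl = prefixVec c l hl
        rw [hprefT (X ω)]
        exact h1
    | succ i hli ih =>
      intro hi c y
      have hin : i < n := hi
      have hsplit : {ω | prefixVec (T (X ω)) (i + 1) hi = prefixVec c (i + 1) hi ∧ Y ω = y} =
          {ω | T (X ω) ⟨i, hin⟩ = c ⟨i, hin⟩} ∩
            {ω | prefixVec (T (X ω)) i hin.le = prefixVec c i hin.le ∧ Y ω = y} := by
        ext ω
        simp only [Set.mem_setOf_eq, Set.mem_inter_iff]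
        rw [prefix_succ_iff hin hi]
        tauto
      rw [hsplit, probOf_inter_eq p hp0, ih hin.le c y, Qfun_succ p _ Y hli hin]
      have hg : condProb p {ω | T (X ω) ⟨i, hin⟩ = c ⟨i, hin⟩}
          {ω | prefixVec (T (X ω)) i hin.le = prefixVec c i hin.le ∧ Y ω = y} =
          gfun p (fun ω => T (X ω)) Y ⟨i, hin⟩ c y := rfl
      rw [hg]; ring
  -- factorization for the stochastic decoder
  have factA : ∀ i, l ≤ i → ∀ (hi : i ≤ n) (x c : Fin n → 𝒳) (y : Fin n → 𝒴),
      probOf p {ω | X ω = x ∧ prefixVec (Chat ω) i hi = prefixVec c i hi ∧ Y ω = y} =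
        (if A x = prefixVec c l hl then probOf p {ω | X ω = x ∧ Y ω = y} else 0) *
          Qfun p (fun ω => T (X ω)) Y l i c y := by
    intro i hli
    induction i, hli using Nat.le_induction with
    | base =>
      intro hi x c y
      rw [Qfun_base, mul_one]
      by_cases hA : A x = prefixVec c l hl
      · rw [if_pos hA]
        congr 1
        ext ω
        simp only [Set.mem_setOf_eq]
        constructor
        · rintro ⟨h1, h2, h3⟩; exact ⟨h1, h3⟩
        · rintro ⟨h1, h2⟩
          refine ⟨h1, ?_, h2⟩
          show prefixVec (Chat ω) l hl = prefixVec c l hl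
          rw [hinit ω, h1, hA]
      · rw [if_neg hA]
        have he : {ω | X ω = x ∧ prefixVec (Chat ω) l hi = prefixVec c l hi ∧ Y ω = y} =
            (∅ : Set Ω) :=
          Set.eq_empty_iff_forall_notMem.mpr fun ω hω => hA (by
            have h2' : prefixVec (Chat ω) l hl = prefixVec c l hl := hω.2.1
            rw [hinit ω, hω.1] at h2'
            exact h2')
        rw [he, probOf_empty]
    | succ i hli ih =>
      intro hi x c y
      have hin : i < n := hi
      have hsplit : {ω | X ω = x ∧
          prefixVec (Chat ω) (i + 1) hi = prefixVec c (i + 1) hi ∧ Y ω = y} =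
          {ω | Chat ω ⟨i, hin⟩ = c ⟨i, hin⟩ ∧ X ω = x ∧
            prefixVec (Chat ω) i hin.le = prefixVec c i hin.le ∧ Y ω = y} := by
        ext ω
        simp only [Set.mem_setOf_eq]
        rw [prefix_succ_iff hin hi]
        tauto
      rw [hsplit]
      rcases (probOf_nonneg p hp0
          {ω | prefixVec (T (X ω)) i hin.le = prefixVec c i hin.le ∧ Y ω = y}).eq_or_lt with
        hz | hpos
      · -- degenerate case : everything is zero
        have hDQ : probOf p {ω | A (X ω) = prefixVec c l hl ∧ Y ω = y} *
            Qfun p (fun ω => T (X ω)) Y l i c y = 0 := by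
          rw [← chainC i hli hin.le c y]; exact hz.symm
        have hsum : probOf p
            {ω | prefixVec (Chat ω) i hin.le = prefixVec c i hin.le ∧ Y ω = y} = 0 := by
          rw [probOf_partition p _ X]
          have hterm : ∀ x' : Fin n → 𝒳,
              probOf p ({ω | prefixVec (Chat ω) i hin.le = prefixVec c i hin.le ∧ Y ω = y} ∩
                {ω | X ω = x'}) =
              (if A x' = prefixVec c l hl then probOf p {ω | X ω = x' ∧ Y ω = y} else 0) *
                Qfun p (fun ω => T (X ω)) Y l i c y := by
            intro x'
            rw [← ih hin.le x' c y]
            congr 1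
            ext ω
            simp only [Set.mem_inter_iff, Set.mem_setOf_eq]
            tauto
          rw [Finset.sum_congr rfl fun x' _ => hterm x', ← Finset.sum_mul,
            ← hfiber (prefixVec c l hl) y]
          exact hDQ
        have hle : probOf p {ω | Chat ω ⟨i, hin⟩ = c ⟨i, hin⟩ ∧ X ω = x ∧
            prefixVec (Chat ω) i hin.le = prefixVec c i hin.le ∧ Y ω = y} = 0 := by
          refine le_antisymm ?_ (probOf_nonneg p hp0 _)
          calc probOf p {ω | Chat ω ⟨i, hin⟩ = c ⟨i, hin⟩ ∧ X ω = x ∧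
                  prefixVec (Chat ω) i hin.le = prefixVec c i hin.le ∧ Y ω = y} ≤
              probOf p {ω | prefixVec (Chat ω) i hin.le = prefixVec c i hin.le ∧ Y ω = y} :=
              probOf_mono p hp0 fun ω hω => ⟨hω.2.2.1, hω.2.2.2⟩
            _ = 0 := hsum
        rw [hle]
        have hterm2 : (if A x = prefixVec c l hl then probOf p {ω | X ω = x ∧ Y ω = y} else 0) *
            Qfun p (fun ω => T (X ω)) Y l i c y = 0 := by
          rcases mul_eq_zero.mp hDQ with hD | hQ
          · have h0 := hfiber (prefixVec c l hl) y
            rw [hD] at h0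
            have hnn : ∀ x' ∈ Finset.univ,
                (0:ℝ) ≤ (if A x' = prefixVec c l hl then
                  probOf p {ω | X ω = x' ∧ Y ω = y} else 0) := fun x' _ => by
              split
              · exact probOf_nonneg p hp0 _
              · exact le_refl 0
            have hterm0 := (Finset.sum_eq_zero_iff_of_nonneg hnn).mp h0.symm x (Finset.mem_univ x)
            rw [hterm0, zero_mul]
          · rw [hQ, mul_zero]
        rw [Qfun_succ p _ Y hli hin, ← mul_assoc, hterm2, zero_mul]
      · -- positive case : use hstep
        have hstep' := hstep ⟨i, hin⟩ hli (prefixVec c i hin.le) y hpos (c ⟨i, hin⟩) x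
        rw [hstep', ih hin.le x c y]
        have hg : condProb p {ω | T (X ω) ⟨i, hin⟩ = c ⟨i, hin⟩}
            {ω | prefixVec (T (X ω)) i hin.le = prefixVec c i hin.le ∧ Y ω = y} =
            gfun p (fun ω => T (X ω)) Y ⟨i, hin⟩ c y := rfl
        rw [hg, Qfun_succ p _ Y hli hin]
        ring
  -- endpoint identities
  have hjoint : ∀ (x c : Fin n → 𝒳) (y : Fin n → 𝒴),
      probOf p {ω | X ω = x ∧ Chat ω = c ∧ Y ω = y} =
        (if A x = prefixVec c l hl then probOf p {ω | X ω = x ∧ Y ω = y} else 0) *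
          Qfun p (fun ω => T (X ω)) Y l n c y := by
    intro x c y
    have h1 := factA n hl le_rfl x c y
    have he : {ω | X ω = x ∧ prefixVec (Chat ω) n le_rfl = prefixVec c n le_rfl ∧ Y ω = y} =
        {ω | X ω = x ∧ Chat ω = c ∧ Y ω = y} := by
      ext ω
      rw [Set.mem_setOf_eq, Set.mem_setOf_eq, prefixVec_n, prefixVec_n]
    rw [← he]
    exact h1
  have hCjoint : ∀ (c : Fin n → 𝒳) (y : Fin n → 𝒴),
      probOf p {ω | X ω = T.symm c ∧ Y ω = y} =
        probOf p {ω | A (X ω) = prefixVec c l hl ∧ Y ω = y} *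
          Qfun p (fun ω => T (X ω)) Y l n c y := by
    intro c y
    have h1 := chainC n hl le_rfl c y
    have he : {ω | prefixVec (T (X ω)) n le_rfl = prefixVec c n le_rfl ∧ Y ω = y} =
        {ω | X ω = T.symm c ∧ Y ω = y} := by
      ext ω
      rw [Set.mem_setOf_eq, Set.mem_setOf_eq, prefixVec_n, prefixVec_n]
      constructor
      · rintro ⟨ha, hb⟩; exact ⟨(Equiv.eq_symm_apply T).mpr ha, hb⟩
      · rintro ⟨ha, hb⟩; exact ⟨(Equiv.eq_symm_apply T).mp ha, hb⟩
    rw [← he]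
    exact h1
  have hWDr : ∀ (x : Fin n → 𝒳) (y : Fin n → 𝒴),
      probOf p {ω | X ω = x ∧ Y ω = y} =
        probOf p {ω | A (X ω) = A x ∧ Y ω = y} *
          Qfun p (fun ω => T (X ω)) Y l n (T x) y := by
    intro x y
    have h1 := hCjoint (T x) y
    rw [T.symm_apply_apply, hprefT x] at h1
    exact h1
  have hr0 : ∀ (c : Fin n → 𝒳) (y : Fin n → 𝒴),
      0 ≤ Qfun p (fun ω => T (X ω)) Y l n c y :=
    fun c y => Qfun_nonneg p hp0 _ Y l n c y
  have hW0 : ∀ (x : Fin n → 𝒳) (y : Fin n → 𝒴),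
      0 ≤ probOf p {ω | X ω = x ∧ Y ω = y} := fun x y => probOf_nonneg p hp0 _
  have hD0 : ∀ (s : Fin l → 𝒳) (y : Fin n → 𝒴),
      0 ≤ probOf p {ω | A (X ω) = s ∧ Y ω = y} := fun s y => probOf_nonneg p hp0 _
  -- the r's sum to one on each positive fiber
  have hsum_r : ∀ (s : Fin l → 𝒳) (y : Fin n → 𝒴),
      probOf p {ω | A (X ω) = s ∧ Y ω = y} ≠ 0 →
      (∑ c, if prefixVec c l hl = s then Qfun p (fun ω => T (X ω)) Y l n c y else 0) = 1 := by
    intro s y hD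
    have h1 : probOf p {ω | A (X ω) = s ∧ Y ω = y} =
        probOf p {ω | A (X ω) = s ∧ Y ω = y} *
          (∑ c, if prefixVec c l hl = s then Qfun p (fun ω => T (X ω)) Y l n c y else 0) := by
      rw [Finset.mul_sum]
      have h2 : ∀ c : Fin n → 𝒳, (probOf p {ω | A (X ω) = s ∧ Y ω = y} *
          if prefixVec c l hl = s then Qfun p (fun ω => T (X ω)) Y l n c y else 0) =
          (if prefixVec c l hl = s then probOf p {ω | X ω = T.symm c ∧ Y ω = y} else 0) := by
        intro c
        by_cases hc : prefixVec c l hl = s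
        · rw [if_pos hc, if_pos hc, hCjoint c y, hc]
        · rw [if_neg hc, if_neg hc, mul_zero]
      rw [Finset.sum_congr rfl fun c _ => h2 c,
        ← Equiv.sum_comp T (fun c => if prefixVec c l hl = s then
          probOf p {ω | X ω = T.symm c ∧ Y ω = y} else 0)]
      have h3 : ∀ x : Fin n → 𝒳,
          (if prefixVec (T x) l hl = s then
            probOf p {ω | X ω = T.symm (T x) ∧ Y ω = y} else 0) =
          (if A x = s then probOf p {ω | X ω = x ∧ Y ω = y} else 0) := by
        intro x; rw [hprefT x, T.symm_apply_apply]
      rw [Finset.sum_congr rfl fun x _ => h3 x, ← hfiber s y]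
    have h1' : probOf p {ω | A (X ω) = s ∧ Y ω = y} * 1 =
        probOf p {ω | A (X ω) = s ∧ Y ω = y} *
          (∑ c, if prefixVec c l hl = s then Qfun p (fun ω => T (X ω)) Y l n c y else 0) := by
      rw [mul_one]; exact h1
    exact (mul_left_cancel₀ hD h1').symm
  -- rewrite the two probabilities as sums
  have hE2 : probOf p {ω | φ (A (X ω)) (Y ω) ≠ X ω} =
      ∑ x, ∑ y, if φ (A x) y ≠ x then probOf p {ω | X ω = x ∧ Y ω = y} else 0 := by
    rw [probOf_partition p _ (fun ω => (X ω, Y ω)), Fintype.sum_prod_type]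
    refine Finset.sum_congr rfl fun x _ => Finset.sum_congr rfl fun y _ => ?_
    by_cases hxy : φ (A x) y ≠ x
    · rw [if_pos hxy]
      congr 1
      ext ω
      simp only [Set.mem_inter_iff, Set.mem_setOf_eq, Prod.mk.injEq]
      constructor
      · rintro ⟨h1, h2, h3⟩; exact ⟨h2, h3⟩
      · rintro ⟨h1, h2⟩; exact ⟨by rw [h1, h2]; exact hxy, h1, h2⟩
    · rw [if_neg hxy]
      push_neg at hxy
      have he : ({ω | φ (A (X ω)) (Y ω) ≠ X ω} ∩ {ω | (X ω, Y ω) = (x, y)}) = (∅ : Set Ω) :=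
        Set.eq_empty_iff_forall_notMem.mpr fun ω hω => by
          have hx : X ω = x := congrArg Prod.fst hω.2
          have hy : Y ω = y := congrArg Prod.snd hω.2
          exact hω.1 (by rw [hx, hy, hxy])
      rw [he, probOf_empty]
  have hE1 : probOf p {ω | T.symm (Chat ω) ≠ X ω} =
      ∑ x, ∑ c, ∑ y, if c ≠ T x then
        probOf p {ω | X ω = x ∧ Chat ω = c ∧ Y ω = y} else 0 := by
    rw [probOf_partition p _ (fun ω => (X ω, Chat ω, Y ω)), Fintype.sum_prod_type]
    refine Finset.sum_congr rfl fun x _ => ?_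
    rw [Fintype.sum_prod_type]
    refine Finset.sum_congr rfl fun c _ => Finset.sum_congr rfl fun y _ => ?_
    by_cases hc : c ≠ T x
    · rw [if_pos hc]
      congr 1
      ext ω
      simp only [Set.mem_inter_iff, Set.mem_setOf_eq, Prod.mk.injEq]
      constructor
      · rintro ⟨h1, h2, h3, h4⟩; exact ⟨h2, h3, h4⟩
      · rintro ⟨h1, h2, h3⟩
        refine ⟨?_, h1, h2, h3⟩
        rw [h2, h1]
        exact fun he => hc ((Equiv.symm_apply_eq T).mp he)
    · rw [if_neg hc]
      push_neg at hc
      have he : ({ω | T.symm (Chat ω) ≠ X ω} ∩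
          {ω | (X ω, Chat ω, Y ω) = (x, c, y)}) = (∅ : Set Ω) :=
        Set.eq_empty_iff_forall_notMem.mpr fun ω hω => by
          have hx : X ω = x := congrArg Prod.fst hω.2
          have hcc : Chat ω = c := congrArg (fun q => q.2.1) hω.2
          exact hω.1 (by rw [hcc, hc, Equiv.symm_apply_apply, hx])
      rw [he, probOf_empty]
  -- merge the indicator with the factorization
  have hmerge : ∀ (x c : Fin n → 𝒳) (y : Fin n → 𝒴),
      (if c ≠ T x then probOf p {ω | X ω = x ∧ Chat ω = c ∧ Y ω = y} else 0) =
      (if A x = prefixVec c l hl ∧ c ≠ T x then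
        probOf p {ω | X ω = x ∧ Y ω = y} * Qfun p (fun ω => T (X ω)) Y l n c y else 0) := by
    intro x c y
    by_cases hc : c ≠ T x
    · rw [if_pos hc, hjoint x c y]
      by_cases hA : A x = prefixVec c l hl
      · rw [if_pos hA, if_pos ⟨hA, hc⟩]
      · rw [if_neg hA, if_neg (fun h => hA h.1), zero_mul]
    · rw [if_neg hc, if_neg (fun h => hc h.2)]
  -- collapse the sum over c for fixed (x, y)
  have hcollapse : ∀ (x : Fin n → 𝒳) (y : Fin n → 𝒴),
      (∑ c, if A x = prefixVec c l hl ∧ c ≠ T x then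
        probOf p {ω | X ω = x ∧ Y ω = y} * Qfun p (fun ω => T (X ω)) Y l n c y else 0) =
      probOf p {ω | X ω = x ∧ Y ω = y} *
        (1 - Qfun p (fun ω => T (X ω)) Y l n (T x) y) := by
    intro x y
    by_cases hw : probOf p {ω | X ω = x ∧ Y ω = y} = 0
    · rw [hw, zero_mul]
      refine Finset.sum_eq_zero fun c _ => ?_
      split
      · exact zero_mul _
      · rfl
    · have hD : probOf p {ω | A (X ω) = A x ∧ Y ω = y} ≠ 0 := by
        intro h0
        exact hw (by rw [hWDr x y, h0, zero_mul])
      have hs := hsum_r (A x) y hD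
      rw [sum_ite_sub (fun c => A x = prefixVec c l hl)
        (fun c => probOf p {ω | X ω = x ∧ Y ω = y} *
          Qfun p (fun ω => T (X ω)) Y l n c y) (T x)]
      rw [if_pos ((hprefT x).symm : A x = prefixVec (T x) l hl)]
      have h5 : (∑ c, if A x = prefixVec c l hl then
          probOf p {ω | X ω = x ∧ Y ω = y} * Qfun p (fun ω => T (X ω)) Y l n c y else 0) =
          probOf p {ω | X ω = x ∧ Y ω = y} *
            (∑ c, if prefixVec c l hl = A x then
              Qfun p (fun ω => T (X ω)) Y l n c y else 0) := by
        rw [Finset.mul_sum]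
        refine Finset.sum_congr rfl fun c _ => ?_
        by_cases hc : A x = prefixVec c l hl
        · rw [if_pos hc, if_pos hc.symm]
        · rw [if_neg hc, if_neg (fun h => hc h.symm), mul_zero]
      rw [h5, hs, mul_one]
      ring
  -- per-fiber inequality
  have main : ∀ y : Fin n → 𝒴,
      (∑ x, probOf p {ω | A (X ω) = A x ∧ Y ω = y} *
        (Qfun p (fun ω => T (X ω)) Y l n (T x) y *
          (1 - Qfun p (fun ω => T (X ω)) Y l n (T x) y))) ≤
      2 * ∑ x, (if φ (A x) y ≠ x then probOf p {ω | X ω = x ∧ Y ω = y} else 0) := by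
    intro y
    rw [sum_fiber A (fun x => probOf p {ω | A (X ω) = A x ∧ Y ω = y} *
      (Qfun p (fun ω => T (X ω)) Y l n (T x) y *
        (1 - Qfun p (fun ω => T (X ω)) Y l n (T x) y)))]
    rw [sum_fiber A (fun x => if φ (A x) y ≠ x then
      probOf p {ω | X ω = x ∧ Y ω = y} else 0), Finset.mul_sum]
    refine Finset.sum_le_sum fun s _ => ?_
    have hLg : ∀ x : Fin n → 𝒳,
        (if A x = s then probOf p {ω | A (X ω) = A x ∧ Y ω = y} *
          (Qfun p (fun ω => T (X ω)) Y l n (T x) y *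
            (1 - Qfun p (fun ω => T (X ω)) Y l n (T x) y)) else 0) =
        (if A x = s then probOf p {ω | A (X ω) = s ∧ Y ω = y} *
          (Qfun p (fun ω => T (X ω)) Y l n (T x) y *
            (1 - Qfun p (fun ω => T (X ω)) Y l n (T x) y)) else 0) := by
      intro x
      by_cases h : A x = s
      · rw [if_pos h, if_pos h, h]
      · rw [if_neg h, if_neg h]
    have hRg : ∀ x : Fin n → 𝒳,
        (if A x = s then (if φ (A x) y ≠ x then
          probOf p {ω | X ω = x ∧ Y ω = y} else 0) else 0) =
        (if A x = s ∧ x ≠ φ s y then probOf p {ω | X ω = x ∧ Y ω = y} else 0) := by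
      intro x
      by_cases h : A x = s
      · rw [if_pos h]
        by_cases h2 : x = φ s y
        · rw [if_neg (fun hh => hh (by rw [h, ← h2])), if_neg (fun hh => hh.2 h2)]
        · rw [if_pos (fun he => h2 (by rw [← he, h])), if_pos ⟨h, h2⟩]
      · rw [if_neg h, if_neg (fun hh => h hh.1)]
    rw [Finset.sum_congr rfl fun x _ => hLg x, Finset.sum_congr rfl fun x _ => hRg x]
    rw [sum_ite_sub (fun x => A x = s)
      (fun x => probOf p {ω | X ω = x ∧ Y ω = y}) (φ s y), ← hfiber s y]
    by_cases hD : probOf p {ω | A (X ω) = s ∧ Y ω = y} = 0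
    · have hLz : (∑ x, if A x = s then probOf p {ω | A (X ω) = s ∧ Y ω = y} *
          (Qfun p (fun ω => T (X ω)) Y l n (T x) y *
            (1 - Qfun p (fun ω => T (X ω)) Y l n (T x) y)) else 0) = 0 :=
        Finset.sum_eq_zero fun x _ => by
          split
          · rw [hD, zero_mul]
          · rfl
      have hWz : (if A (φ s y) = s then
          probOf p {ω | X ω = φ s y ∧ Y ω = y} else 0) = 0 := by
        by_cases hA : A (φ s y) = s
        · rw [if_pos hA]
          refine le_antisymm ?_ (hW0 _ y)
          calc probOf p {ω | X ω = φ s y ∧ Y ω = y} ≤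
              probOf p {ω | A (X ω) = s ∧ Y ω = y} :=
              probOf_mono p hp0 fun ω hω => ⟨by rw [hω.1, hA], hω.2⟩
            _ = 0 := hD
        · exact if_neg hA
      rw [hLz, hD, hWz]
      norm_num
    · have hDpos : 0 < probOf p {ω | A (X ω) = s ∧ Y ω = y} :=
        lt_of_le_of_ne (hD0 s y) (Ne.symm hD)
      -- the t's sum to one over the fiber
      have h6 : probOf p {ω | A (X ω) = s ∧ Y ω = y} =
          probOf p {ω | A (X ω) = s ∧ Y ω = y} *
            (∑ x, if A x = s then Qfun p (fun ω => T (X ω)) Y l n (T x) y else 0) := by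
        conv_lhs => rw [hfiber s y]
        rw [Finset.mul_sum]
        refine Finset.sum_congr rfl fun x _ => ?_
        by_cases h : A x = s
        · rw [if_pos h, if_pos h, hWDr x y, h]
        · rw [if_neg h, if_neg h, mul_zero]
      have hts : (∑ x, if A x = s then
          Qfun p (fun ω => T (X ω)) Y l n (T x) y else 0) = 1 := by
        have h1' : probOf p {ω | A (X ω) = s ∧ Y ω = y} * 1 =
            probOf p {ω | A (X ω) = s ∧ Y ω = y} *
              (∑ x, if A x = s then Qfun p (fun ω => T (X ω)) Y l n (T x) y else 0) := by
          rw [mul_one]; exact h6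
        exact (mul_left_cancel₀ hD h1').symm
      have htsF : ∑ x ∈ Finset.univ.filter (fun x => A x = s),
          Qfun p (fun ω => T (X ω)) Y l n (T x) y = 1 := by
        rw [Finset.sum_filter]; exact hts
      have hkey := key_ineq (Finset.univ.filter (fun x => A x = s))
        (fun x => Qfun p (fun ω => T (X ω)) Y l n (T x) y)
        (fun x _ => hr0 (T x) y) htsF (φ s y)
      have hLHS : (∑ x, if A x = s then probOf p {ω | A (X ω) = s ∧ Y ω = y} *
          (Qfun p (fun ω => T (X ω)) Y l n (T x) y *
            (1 - Qfun p (fun ω => T (X ω)) Y l n (T x) y)) else 0) =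
          probOf p {ω | A (X ω) = s ∧ Y ω = y} *
            ∑ x ∈ Finset.univ.filter (fun x => A x = s),
              Qfun p (fun ω => T (X ω)) Y l n (T x) y *
                (1 - Qfun p (fun ω => T (X ω)) Y l n (T x) y) := by
        rw [Finset.sum_filter, Finset.mul_sum]
        refine Finset.sum_congr rfl fun x _ => ?_
        split
        · rfl
        · rw [mul_zero]
      have hRW : (if A (φ s y) = s then
          probOf p {ω | X ω = φ s y ∧ Y ω = y} else 0) =
          probOf p {ω | A (X ω) = s ∧ Y ω = y} *
            (if (φ s y) ∈ Finset.univ.filter (fun x => A x = s) then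
              Qfun p (fun ω => T (X ω)) Y l n (T (φ s y)) y else 0) := by
        by_cases hA : A (φ s y) = s
        · have hm : φ s y ∈ Finset.univ.filter (fun x => A x = s) :=
            Finset.mem_filter.mpr ⟨Finset.mem_univ _, hA⟩
          rw [if_pos hA, if_pos hm, hWDr (φ s y) y, hA]
        · have hnm : φ s y ∉ Finset.univ.filter (fun x => A x = s) :=
            fun hm => hA (Finset.mem_filter.mp hm).2
          rw [if_neg hA, if_neg hnm, mul_zero]
      rw [hLHS, hRW]
      calc probOf p {ω | A (X ω) = s ∧ Y ω = y} *
            ∑ x ∈ Finset.univ.filter (fun x => A x = s),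
              Qfun p (fun ω => T (X ω)) Y l n (T x) y *
                (1 - Qfun p (fun ω => T (X ω)) Y l n (T x) y) ≤
          probOf p {ω | A (X ω) = s ∧ Y ω = y} *
            (2 * (1 - if (φ s y) ∈ Finset.univ.filter (fun x => A x = s) then
              Qfun p (fun ω => T (X ω)) Y l n (T (φ s y)) y else 0)) :=
          mul_le_mul_of_nonneg_left hkey (le_of_lt hDpos)
        _ = 2 * (probOf p {ω | A (X ω) = s ∧ Y ω = y} -
            probOf p {ω | A (X ω) = s ∧ Y ω = y} *
              (if (φ s y) ∈ Finset.univ.filter (fun x => A x = s) then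
                Qfun p (fun ω => T (X ω)) Y l n (T (φ s y)) y else 0)) := by ring
  -- assemble everything
  rw [hE1, hE2]
  have hL1 : (∑ x, ∑ c, ∑ y, if c ≠ T x then
      probOf p {ω | X ω = x ∧ Chat ω = c ∧ Y ω = y} else 0) =
      ∑ x, ∑ y, probOf p {ω | X ω = x ∧ Y ω = y} *
        (1 - Qfun p (fun ω => T (X ω)) Y l n (T x) y) := by
    refine Finset.sum_congr rfl fun x _ => ?_
    rw [Finset.sum_comm]
    refine Finset.sum_congr rfl fun y _ => ?_
    rw [← hcollapse x y]
    exact Finset.sum_congr rfl fun c _ => hmerge x c y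
  rw [hL1]
  have hL2 : (∑ x, ∑ y, probOf p {ω | X ω = x ∧ Y ω = y} *
      (1 - Qfun p (fun ω => T (X ω)) Y l n (T x) y)) =
      ∑ y, ∑ x, probOf p {ω | A (X ω) = A x ∧ Y ω = y} *
        (Qfun p (fun ω => T (X ω)) Y l n (T x) y *
          (1 - Qfun p (fun ω => T (X ω)) Y l n (T x) y)) := by
    rw [Finset.sum_comm]
    exact Finset.sum_congr rfl fun y _ => Finset.sum_congr rfl fun x _ => by
      rw [hWDr x y]; ring
  rw [hL2]
  have hR : (∑ x, ∑ y, if φ (A x) y ≠ x then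
      probOf p {ω | X ω = x ∧ Y ω = y} else 0) =
      ∑ y, ∑ x, if φ (A x) y ≠ x then
        probOf p {ω | X ω = x ∧ Y ω = y} else 0 := Finset.sum_comm
  rw [hR, Finset.mul_sum]
  exact Finset.sum_le_sum fun y _ => main y
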